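/- Let G be a finite simple graph, k ≥ 3, U_k a k-set of vertices inducing a clique, and for a clique-inducing set S let R_{k,S} denote the number of (k−|S|)-subsets T of the common neighborhood of S such that S ∪ T induces a K_k (with R_{k,U_k} = 1). Then for any m-subset U_m of U_k with 2 ≤ m ≤ k, the number Q^{U_m} of k-cliques K of G with K ∩ U_k = U_m satisfies the inclusion–exclusion formula Q^{U_m} = ∑_{i=0}^{k−m} (−1)^i ∑_{T_i ∈ C(U_k∖U_m, i)} R_{k, U_m ∪ T_i}. -/
import Mathlib


open Finset

theorem clique_inclusion_exclusion (n k : ℕ) (hk : 3 ≤ k)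
    (G : SimpleGraph (Fin n)) [DecidableRel G.Adj]
    (Uk : Finset (Fin n)) (hUk : G.IsNClique k Uk)
    (R : Finset (Fin n) → ℤ)
    (hR : ∀ S : Finset (Fin n),
      R S = ((((Finset.univ.filter (fun v => ∀ u ∈ S, G.Adj u v)).powersetCard (k - S.card)).filter
        (fun T => G.IsNClique k (S ∪ T))).card : ℤ))
    (m : ℕ) (hm2 : 2 ≤ m) (hmk : m ≤ k)
    (Um : Finset (Fin n)) (hUm : Um ⊆ Uk) (hUmcard : Um.card = m) :
    (((G.cliqueFinset k).filter (fun K => K ∩ Uk = Um)).card : ℤ) =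
      ∑ i ∈ Finset.range (k - m + 1), (-1 : ℤ) ^ i *
        ∑ Ti ∈ (Uk \ Um).powersetCard i, R (Um ∪ Ti) := by
  classical
  -- Step 1: R S counts the k-cliques containing S.
  have hRcount : ∀ S : Finset (Fin n),
      R S = (((G.cliqueFinset k).filter (fun K => S ⊆ K)).card : ℤ) := by
    intro S
    rw [hR]
    congr 1
    norm_cast
    apply Finset.card_bij' (fun T _ => S ∪ T) (fun K _ => K \ S)
    · intro T hT
      simp only [mem_filter, mem_powersetCard] at hT
      simp only [mem_filter, SimpleGraph.mem_cliqueFinset_iff]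
      exact ⟨hT.2, subset_union_left⟩
    · intro K hK
      simp only [mem_filter, SimpleGraph.mem_cliqueFinset_iff] at hK
      obtain ⟨hKclique, hSK⟩ := hK
      simp only [mem_filter, mem_powersetCard]
      refine ⟨⟨?_, ?_⟩, ?_⟩
      · intro v hv
        simp only [mem_sdiff] at hv
        simp only [mem_filter, mem_univ, true_and]
        intro u hu
        exact hKclique.isClique (hSK hu) hv.1 (fun h => hv.2 (h ▸ hu))
      · rw [card_sdiff_of_subset hSK, hKclique.2]
      · rwa [Finset.union_sdiff_of_subset hSK]
    · intro T hT
      simp only [mem_filter, mem_powersetCard] at hT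
      have hdisj : Disjoint S T := by
        rw [Finset.disjoint_left]
        intro a haS haT
        have := hT.1.1 haT
        simp only [mem_filter, mem_univ, true_and] at this
        exact G.irrefl (this a haS)
      rw [Finset.union_sdiff_cancel_left hdisj]
    · intro K hK
      simp only [mem_filter, SimpleGraph.mem_cliqueFinset_iff] at hK
      exact Finset.union_sdiff_of_subset hK.2
  -- Step 2: rewrite RHS as a single sum over the powerset of D := Uk \ Um.
  set D := Uk \ Um with hD
  have hDcard : D.card = k - m := by
    rw [hD, card_sdiff_of_subset hUm, hUk.2, hUmcard]
  have hstep : ∑ i ∈ Finset.range (k - m + 1), (-1 : ℤ) ^ i *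
        ∑ Ti ∈ D.powersetCard i, R (Um ∪ Ti)
      = ∑ T ∈ D.powerset, (-1 : ℤ) ^ T.card * R (Um ∪ T) := by
    rw [Finset.sum_powerset, ← hDcard]
    refine Finset.sum_congr rfl fun i _ => ?_
    rw [Finset.mul_sum]
    refine Finset.sum_congr rfl fun T hT => ?_
    rw [(Finset.mem_powersetCard.1 hT).2]
  rw [hstep]
  -- Step 3: swap sums and apply inclusion-exclusion.
  have hswap : ∑ T ∈ D.powerset, (-1 : ℤ) ^ T.card * R (Um ∪ T)
      = ∑ K ∈ G.cliqueFinset k, ∑ T ∈ D.powerset,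
          (-1 : ℤ) ^ T.card * (if Um ∪ T ⊆ K then 1 else 0) := by
    rw [Finset.sum_comm]
    refine Finset.sum_congr rfl fun T _ => ?_
    rw [hRcount, ← Finset.mul_sum]
    congr 1
    rw [Finset.sum_boole]
  rw [hswap]
  have hterm : ∀ K ∈ G.cliqueFinset k,
      (∑ T ∈ D.powerset, (-1 : ℤ) ^ T.card * (if Um ∪ T ⊆ K then 1 else 0))
      = if K ∩ Uk = Um then 1 else 0 := by
    intro K hK
    by_cases hUmK : Um ⊆ K
    · have h1 : ∀ T : Finset (Fin n), (Um ∪ T ⊆ K) ↔ (T ⊆ K) := by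
        intro T; rw [Finset.union_subset_iff]; tauto
      have h2 : ∑ T ∈ D.powerset, (-1 : ℤ) ^ T.card * (if Um ∪ T ⊆ K then 1 else 0)
          = ∑ T ∈ (D ∩ K).powerset, (-1 : ℤ) ^ T.card := by
        rw [← Finset.sum_filter_add_sum_filter_not D.powerset (fun T => T ⊆ K)]
        have hz : ∑ T ∈ D.powerset.filter (fun T => ¬ T ⊆ K),
            (-1 : ℤ) ^ T.card * (if Um ∪ T ⊆ K then 1 else 0) = 0 := by
          refine Finset.sum_eq_zero fun T hT => ?_
          simp only [mem_filter] at hT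
          rw [if_neg (fun h => hT.2 ((h1 T).1 h)), mul_zero]
        rw [hz, add_zero]
        have heq : D.powerset.filter (fun T => T ⊆ K) = (D ∩ K).powerset := by
          ext T
          simp only [mem_filter, mem_powerset, Finset.subset_inter_iff]
        rw [heq]
        refine Finset.sum_congr rfl fun T hT => ?_
        simp only [mem_powerset, Finset.subset_inter_iff] at hT
        rw [if_pos ((h1 T).2 hT.2), mul_one]
      rw [h2, Finset.sum_powerset_neg_one_pow_card]
      congr 1
      simp only [eq_iff_iff]
      constructor
      · intro h
        apply Finset.Subset.antisymm
        · intro a ha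
          simp only [mem_inter] at ha
          by_contra haUm
          have : a ∈ D ∩ K := by
            simp only [hD, mem_inter, mem_sdiff]
            exact ⟨⟨ha.2, haUm⟩, ha.1⟩
          rw [h] at this
          exact absurd this (Finset.notMem_empty a)
        · intro a ha
          exact Finset.mem_inter.2 ⟨hUmK ha, hUm ha⟩
      · intro h
        rw [Finset.eq_empty_iff_forall_notMem]
        intro a ha
        simp only [hD, mem_inter, mem_sdiff] at ha
        have : a ∈ K ∩ Uk := Finset.mem_inter.2 ⟨ha.2, ha.1.1⟩
        rw [h] at this
        exact ha.1.2 this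
    · have hz : ∀ T ∈ D.powerset,
          (-1 : ℤ) ^ T.card * (if Um ∪ T ⊆ K then 1 else 0) = 0 := by
        intro T _
        rw [if_neg (fun h => hUmK (Finset.union_subset_iff.1 h).1), mul_zero]
      rw [Finset.sum_eq_zero hz, if_neg]
      intro h
      exact hUmK (h ▸ Finset.inter_subset_left)
  rw [Finset.sum_congr rfl hterm, Finset.sum_boole]
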